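/- Let ρ = 1. For each integer n ≥ 2, let G_n(1) denote the single-node freshness in the n-node fully connected network, defined by the backward recursion G_n(n) = 1/(1+ρ) and G_n(j) = (j/n + (j(n−j)/(n−1))·G_n(j+1)) / (ρ + j/n + j(n−j)/(n−1)) for j = 1, …, n−1. Then there exist constants c₂ ≥ c₁ > 0 and an integer N such that c₁·(log n)/n ≤ G_n(1) ≤ c₂·(log n)/n for all n ≥ N; i.e., the freshness decreases to 0 as (log n)/n. -/

import Mathlib

set_option maxHeartbeats 1000000
open Finset


noncomputable def wA (n j : ℕ) : ℝ :=
  1/(2*(n:ℝ)) + ∑ i ∈ Finset.Ico j n, 1/((i:ℝ)*((n:ℝ)-(i:ℝ)))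

lemma wA_nonneg {n j : ℕ} (hj : 1 ≤ j) (hn : 0 < n) : 0 ≤ wA n j := by
  have hnr : (0:ℝ) < n := by exact_mod_cast hn
  have h2 : 0 ≤ ∑ i ∈ Finset.Ico j n, 1/((i:ℝ)*((n:ℝ)-(i:ℝ))) := by
    apply Finset.sum_nonneg
    intro i hi
    rw [Finset.mem_Ico] at hi
    have h1 : (1:ℝ) ≤ i := by exact_mod_cast le_trans hj hi.1
    have h2 : (i:ℝ) < n := by exact_mod_cast hi.2
    have : (0:ℝ) < (i:ℝ)*((n:ℝ)-(i:ℝ)) := by nlinarith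
    positivity
  have h1 : (0:ℝ) ≤ 1/(2*(n:ℝ)) := by positivity
  unfold wA; linarith

lemma wA_succ {n j : ℕ} (h2 : j < n) :
    wA n j = 1/((j:ℝ)*((n:ℝ)-(j:ℝ))) + wA n (j+1) := by
  unfold wA
  rw [Finset.sum_eq_sum_Ico_succ_bot h2]
  ring

lemma upperB (G : ℕ → ℕ → ℝ) (n : ℕ) (hn : 2 ≤ n)
    (hGnn : G n n = 1/(1+1))
    (hrec : ∀ j : ℕ, 1 ≤ j → j ≤ n - 1 →
      G n j = ((j : ℝ) / n + ((j : ℝ) * ((n : ℝ) - j) / ((n : ℝ) - 1)) * G n (j + 1)) /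
        (1 + (j : ℝ) / n + (j : ℝ) * ((n : ℝ) - j) / ((n : ℝ) - 1))) :
    ∀ k j : ℕ, 1 ≤ j → j + k = n → G n j ≤ j * wA n j := by
  intro k
  induction k with
  | zero =>
    intro j hj hjk
    have hjn : j = n := by omega
    subst hjn
    rw [hGnn]
    unfold wA
    rw [Finset.Ico_self, Finset.sum_empty]
    have hn0 : (0:ℝ) < j := by exact_mod_cast (by omega : 0 < j)
    have e : (j:ℝ) * (1/(2*(j:ℝ)) + 0) = 1/2 := by field_simp; ring
    rw [e]
    norm_num
  | succ k ih =>
    intro j hj hjk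
    have hjn1 : j ≤ n - 1 := by omega
    have hjltn : j < n := by omega
    have hrecj := hrec j hj hjn1
    have hIH := ih (j+1) (by omega) (by omega)
    have hw' : 0 ≤ wA n (j+1) := wA_nonneg (by omega) (by omega)
    have hwj : wA n j = 1/((j:ℝ)*((n:ℝ)-(j:ℝ))) + wA n (j+1) := wA_succ hjltn
    push_cast at hIH
    set J : ℝ := (j:ℝ) with hJdef
    set Nn : ℝ := (n:ℝ) with hNdef
    set w' : ℝ := wA n (j+1) with hw'def
    have h1J : (1:ℝ) ≤ J := by rw [hJdef]; exact_mod_cast hj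
    have hJ1N : J + 1 ≤ Nn := by
      rw [hJdef, hNdef]; exact_mod_cast (by omega : j+1 ≤ n)
    have hNpos : (0:ℝ) < Nn := by linarith
    have hN1 : (1:ℝ) ≤ Nn - 1 := by linarith
    have hNJ : (1:ℝ) ≤ Nn - J := by linarith
    set A : ℝ := J/Nn with hAdef
    set B : ℝ := J*(Nn-J)/(Nn-1) with hBdef
    clear_value J Nn w' A B
    have hA0 : 0 ≤ A := by rw [hAdef]; positivity
    have hB0 : 0 ≤ B := by
      rw [hBdef]
      apply div_nonneg (mul_nonneg (by linarith) (by linarith)) (by linarith)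
    have hD0 : (0:ℝ) < 1 + A + B := by linarith
    have hBJ : B ≤ J := by
      rw [hBdef, div_le_iff₀ (by linarith : (0:ℝ) < Nn - 1)]
      nlinarith
    -- key pieces
    have hBJD : B*(J+1) ≤ J*(1 + A + B) := by nlinarith
    have hAD : A ≤ (1 + A + B)/(Nn-J) := by
      rw [le_div_iff₀ (by linarith : (0:ℝ) < Nn - J)]
      have h5 : A*(Nn-J) ≤ B := by
        rw [hAdef, hBdef, div_mul_eq_mul_div, div_le_div_iff₀ hNpos (by linarith : (0:ℝ) < Nn-1)]
        nlinarith
      linarith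
    rw [hrecj, div_le_iff₀ hD0]
    have hstep1 : A + B * G n (j+1) ≤ A + B * ((J+1) * w') := by
      nlinarith [mul_le_mul_of_nonneg_left hIH hB0]
    have hJw : J * (1/(J*(Nn-J))) = 1/(Nn-J) := by
      have hJ0 : J ≠ 0 := by linarith
      field_simp
    have hstep2 : A + B * ((J+1) * w') ≤ J * wA n j * (1 + A + B) := by
      rw [hwj]
      have hJ0 : J ≠ 0 := by linarith
      have hNJ0 : Nn - J ≠ 0 := by linarith
      have e1 : J * (1/(J*(Nn-J)) + w') * (1 + A + B)
          = (1/(Nn-J)) * (1 + A + B) + J * w' * (1 + A + B) := by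
        field_simp
      rw [e1]
      have p1 : B * ((J+1) * w') ≤ J * w' * (1 + A + B) := by
        calc B * ((J+1) * w') = B*(J+1)*w' := by ring
          _ ≤ J*(1 + A + B)*w' := mul_le_mul_of_nonneg_right hBJD hw'
          _ = J * w' * (1 + A + B) := by ring
      have p2 : A ≤ (1/(Nn-J)) * (1 + A + B) := by
        rw [one_div, inv_mul_eq_div]
        exact hAD
      linarith
    linarith


noncomputable def vA (n m j : ℕ) : ℝ :=
  ∑ i ∈ Finset.Ico j n, (if i ≤ m then 1/(8*(i:ℝ)*(n:ℝ)) else 0)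

lemma vA_term_nonneg (m n i : ℕ) :
    (0:ℝ) ≤ (if i ≤ m then 1/(8*(i:ℝ)*(n:ℝ)) else 0) := by positivity

lemma vA_nonneg (n m j : ℕ) : 0 ≤ vA n m j :=
  Finset.sum_nonneg fun i _ => vA_term_nonneg m n i

lemma vA_succ {n j : ℕ} (m : ℕ) (h2 : j < n) :
    vA n m j = (if j ≤ m then 1/(8*(j:ℝ)*(n:ℝ)) else 0) + vA n m (j+1) := by
  unfold vA
  rw [Finset.sum_eq_sum_Ico_succ_bot h2]

lemma vA_zero_of_gt {n m j : ℕ} (h : m < j) : vA n m j = 0 := by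
  apply Finset.sum_eq_zero
  intro i hi
  rw [Finset.mem_Ico] at hi
  rw [if_neg (by omega)]

lemma vA_mono {n m j : ℕ} (hj : 1 ≤ j) : vA n m j ≤ vA n m 1 := by
  apply Finset.sum_le_sum_of_subset_of_nonneg
  · exact Finset.Ico_subset_Ico hj le_rfl
  · intro i _ _; exact vA_term_nonneg m n i


lemma vA_one {n m : ℕ} (h : m + 1 ≤ n) :
    vA n m 1 = (harmonic m : ℝ)/(8*(n:ℝ)) := by
  unfold vA
  rw [← Finset.sum_Ico_consecutive _ (by omega : 1 ≤ m+1) h]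
  have h2 : ∑ i ∈ Finset.Ico (m+1) n, (if i ≤ m then 1/(8*(i:ℝ)*(n:ℝ)) else 0) = 0 := by
    apply Finset.sum_eq_zero
    intro i hi
    rw [Finset.mem_Ico] at hi
    rw [if_neg (by omega)]
  rw [h2, add_zero]
  have h3 : ∀ i ∈ Finset.Ico 1 (m+1), (if i ≤ m then 1/(8*(i:ℝ)*(n:ℝ)) else 0)
      = (1/(8*(n:ℝ))) * ((i:ℝ))⁻¹ := by
    intro i hi
    rw [Finset.mem_Ico] at hi
    rw [if_pos (by omega)]
    have : (1:ℝ) ≤ i := by exact_mod_cast hi.1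
    field_simp
  rw [Finset.sum_congr rfl h3, ← Finset.mul_sum]
  have h4 : ∑ i ∈ Finset.Ico 1 (m+1), ((i:ℝ))⁻¹ = (harmonic m : ℝ) := by
    rw [harmonic_eq_sum_Icc]
    push_cast
    congr 1
  rw [h4]; ring

lemma lowerB (G : ℕ → ℕ → ℝ) (n m : ℕ) (hn : 2 ≤ n) (hm1 : 1 ≤ m) (hmn : m + 1 ≤ n)
    (hGnn : G n n = 1/(1+1))
    (hrec : ∀ j : ℕ, 1 ≤ j → j ≤ n - 1 →
      G n j = ((j : ℝ) / n + ((j : ℝ) * ((n : ℝ) - j) / ((n : ℝ) - 1)) * G n (j + 1)) /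
        (1 + (j : ℝ) / n + (j : ℝ) * ((n : ℝ) - j) / ((n : ℝ) - 1)))
    (hV : vA n m 1 ≤ (1 + Real.log n)/(8*(n:ℝ)))
    (hkey : (m:ℝ) * (1 + Real.log n) ≤ 2*((n:ℝ)-1))
    (hL0 : 0 ≤ Real.log n) :
    ∀ k j : ℕ, 1 ≤ j → j + k = n → (j:ℝ) * vA n m j ≤ G n j := by
  intro k
  induction k with
  | zero =>
    intro j hj hjk
    have hjn : j = n := by omega
    subst hjn
    rw [hGnn, vA_zero_of_gt (by omega : m < j)]
    norm_num
  | succ k ih =>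
    intro j hj hjk
    have hjn1 : j ≤ n - 1 := by omega
    have hjltn : j < n := by omega
    have hrecj := hrec j hj hjn1
    have hIH := ih (j+1) (by omega) (by omega)
    have hv' : 0 ≤ vA n m (j+1) := vA_nonneg n m (j+1)
    have hvj : vA n m j = (if j ≤ m then 1/(8*(j:ℝ)*(n:ℝ)) else 0) + vA n m (j+1) :=
      vA_succ m hjltn
    have hvV : vA n m (j+1) ≤ (1 + Real.log n)/(8*(n:ℝ)) :=
      le_trans (vA_mono (by omega)) hV
    push_cast at hIH
    set L : ℝ := Real.log n with hLdef
    set M : ℝ := (m:ℝ) with hMdef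
    set J : ℝ := (j:ℝ) with hJdef
    set Nn : ℝ := (n:ℝ) with hNdef
    set v' : ℝ := vA n m (j+1) with hv'def
    have h1J : (1:ℝ) ≤ J := by rw [hJdef]; exact_mod_cast hj
    have hJ1N : J + 1 ≤ Nn := by
      rw [hJdef, hNdef]; exact_mod_cast (by omega : j+1 ≤ n)
    have h1M : (1:ℝ) ≤ M := by rw [hMdef]; exact_mod_cast hm1
    have hNpos : (0:ℝ) < Nn := by linarith
    have hN1 : (1:ℝ) ≤ Nn - 1 := by linarith
    have hNJ : (1:ℝ) ≤ Nn - J := by linarith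
    set A : ℝ := J/Nn with hAdef
    set B : ℝ := J*(Nn-J)/(Nn-1) with hBdef
    clear_value L M J Nn v' A B
    have hA0 : 0 ≤ A := by rw [hAdef]; positivity
    have hA1 : A ≤ 1 := by
      rw [hAdef, div_le_one hNpos]; linarith
    have hB0 : 0 ≤ B := by
      rw [hBdef]
      apply div_nonneg (mul_nonneg (by linarith) (by linarith)) (by linarith)
    have hBJ : B ≤ J := by
      rw [hBdef, div_le_iff₀ (by linarith : (0:ℝ) < Nn - 1)]
      nlinarith
    have hD0 : (0:ℝ) < 1 + A + B := by linarith
    have hDle : 1 + A + B ≤ 4*J := by linarith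
    rw [hrecj, le_div_iff₀ hD0]
    have hstep1 : A + B * ((J+1) * v') ≤ A + B * G n (j+1) := by
      nlinarith [mul_le_mul_of_nonneg_left hIH hB0]
    -- main inequality:  J * vA n m j * (1+A+B) ≤ A + B*((J+1)*v')
    have hmain : J * vA n m j * (1 + A + B) ≤ A + B * ((J+1) * v') := by
      rw [hvj]
      by_cases hjm : j ≤ m
      · rw [if_pos hjm]
        have hJM : J ≤ M := by rw [hJdef, hMdef]; exact_mod_cast hjm
        have hJ0 : J ≠ 0 := by linarith
        have e1 : J * (1/(8*J*Nn) + v') * (1 + A + B)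
            = (1 + A + B)/(8*Nn) + J * v' * (1 + A + B) := by
          field_simp
        rw [e1]
        -- piece 1 : (1+A+B)/(8Nn) ≤ J/(2Nn)
        have p1 : (1 + A + B)/(8*Nn) ≤ J/(2*Nn) := by
          rw [div_le_div_iff₀ (by linarith) (by linarith)]
          nlinarith
        -- piece 2 : (J*(1+A) - B) * v' ≤ J/(2*Nn)
        have hq : J*(1+A) - B ≤ J*(2*M/(Nn-1)) := by
          have e2 : J*(1+A) - B = J*((J-1)/(Nn-1) + J/Nn) := by
            rw [hAdef, hBdef]
            field_simp
            ring
          rw [e2]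
          have u1 : (J-1)/(Nn-1) ≤ M/(Nn-1) := by gcongr <;> linarith
          have u2 : J/Nn ≤ M/(Nn-1) := by gcongr <;> linarith
          have e3 : 2*M/(Nn-1) = M/(Nn-1) + M/(Nn-1) := by ring
          have u3 : (J-1)/(Nn-1) + J/Nn ≤ 2*M/(Nn-1) := by rw [e3]; linarith
          exact mul_le_mul_of_nonneg_left u3 (by linarith)
        have p2 : (J*(1+A) - B) * v' ≤ J/(2*Nn) := by
          have hP0 : 0 ≤ J*(2*M/(Nn-1)) := by
            apply mul_nonneg (by linarith)
            apply div_nonneg (by linarith) (by linarith)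
          have q1 : (J*(1+A) - B)*v' ≤ (J*(2*M/(Nn-1)))*v' :=
            mul_le_mul_of_nonneg_right hq hv'
          have q2 : (J*(2*M/(Nn-1)))*v' ≤ (J*(2*M/(Nn-1))) * ((1+L)/(8*Nn)) :=
            mul_le_mul_of_nonneg_left hvV hP0
          have q3 : (J*(2*M/(Nn-1))) * ((1+L)/(8*Nn)) = J * (M*(1+L)) / (4*Nn*(Nn-1)) := by
            field_simp
            ring
          have q4 : J * (M*(1+L)) / (4*Nn*(Nn-1)) ≤ J * (2*(Nn-1)) / (4*Nn*(Nn-1)) := by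
            gcongr
          have q5 : J * (2*(Nn-1)) / (4*Nn*(Nn-1)) = J/(2*Nn) := by
            rw [div_eq_div_iff (by nlinarith) (by linarith)]
            ring
          calc (J*(1+A) - B)*v' ≤ (J*(2*M/(Nn-1)))*v' := q1
            _ ≤ (J*(2*M/(Nn-1))) * ((1+L)/(8*Nn)) := q2
            _ = J * (M*(1+L)) / (4*Nn*(Nn-1)) := q3
            _ ≤ J * (2*(Nn-1)) / (4*Nn*(Nn-1)) := q4
            _ = J/(2*Nn) := q5
        have ering : J*v'*(1+A+B) - B*((J+1)*v') = (J*(1+A) - B)*v' := by ring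
        have eJN : J/(2*Nn) + J/(2*Nn) = J/Nn := by ring
        have eA : A = J/Nn := hAdef
        linarith
      · rw [if_neg hjm]
        have hv0 : v' = 0 := by
          rw [hv'def]; exact vA_zero_of_gt (by omega)
        rw [hv0]
        simpa using hA0
    calc J * vA n m j * (1 + A + B) ≤ A + B * ((J+1) * v') := hmain
      _ ≤ A + B * G n (j+1) := hstep1


lemma sum_reflect_inv (n : ℕ) (hn : 2 ≤ n) :
    ∑ i ∈ Finset.Ico 1 n, ((n:ℝ)-(i:ℝ))⁻¹ = ∑ i ∈ Finset.Ico 1 n, ((i:ℝ))⁻¹ := by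
  apply Finset.sum_nbij' (fun i => n - i) (fun i => n - i)
  · intro a ha; rw [Finset.mem_Ico] at *; omega
  · intro a ha; rw [Finset.mem_Ico] at *; omega
  · intro a ha; rw [Finset.mem_Ico] at ha; omega
  · intro a ha; rw [Finset.mem_Ico] at ha; omega
  · intro a ha
    rw [Finset.mem_Ico] at ha
    have : ((n - a : ℕ):ℝ) = (n:ℝ) - (a:ℝ) := by
      have : a ≤ n := by omega
      push_cast [this]
      ring
    rw [this]

lemma harmonic_Ico (k : ℕ) :
    ∑ i ∈ Finset.Ico 1 (k+1), ((i:ℝ))⁻¹ = (harmonic k : ℝ) := by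
  rw [harmonic_eq_sum_Icc]
  push_cast
  congr 1

lemma wA_sum_eq (n : ℕ) (hn : 2 ≤ n) :
    ∑ i ∈ Finset.Ico 1 n, 1/((i:ℝ)*((n:ℝ)-(i:ℝ)))
      = (2/(n:ℝ)) * (harmonic (n-1) : ℝ) := by
  have hNpos : (0:ℝ) < n := by exact_mod_cast (by omega : 0 < n)
  have hterm : ∀ i ∈ Finset.Ico 1 n,
      1/((i:ℝ)*((n:ℝ)-(i:ℝ))) = (1/(n:ℝ)) * (((i:ℝ))⁻¹ + ((n:ℝ)-(i:ℝ))⁻¹) := by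
    intro i hi
    rw [Finset.mem_Ico] at hi
    have h1 : (1:ℝ) ≤ (i:ℝ) := by exact_mod_cast hi.1
    have h2 : (i:ℝ) < (n:ℝ) := by exact_mod_cast hi.2
    have hi0 : (i:ℝ) ≠ 0 := by linarith
    have hni0 : (n:ℝ) - (i:ℝ) ≠ 0 := by linarith
    field_simp
    ring
  rw [Finset.sum_congr rfl hterm, ← Finset.mul_sum, Finset.sum_add_distrib,
    sum_reflect_inv n hn]
  have hIco : Finset.Ico 1 n = Finset.Ico 1 ((n-1)+1) := by congr 1; omega
  rw [hIco, harmonic_Ico (n-1)]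
  ring

theorem fully_connected_freshness_scaling_rho_one
    (ρ : ℝ) (hρ : ρ = 1)
    (G : ℕ → ℕ → ℝ)
    (hGn : ∀ n : ℕ, 2 ≤ n → G n n = 1 / (1 + ρ))
    (hGrec : ∀ n : ℕ, 2 ≤ n → ∀ j : ℕ, 1 ≤ j → j ≤ n - 1 →
      G n j = ((j : ℝ) / n + ((j : ℝ) * ((n : ℝ) - j) / ((n : ℝ) - 1)) * G n (j + 1)) /
        (ρ + (j : ℝ) / n + (j : ℝ) * ((n : ℝ) - j) / ((n : ℝ) - 1))) :
    ∃ c₁ c₂ : ℝ, 0 < c₁ ∧ c₁ ≤ c₂ ∧ ∃ N : ℕ, ∀ n : ℕ, N ≤ n →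
      c₁ * (Real.log n / n) ≤ G n 1 ∧ G n 1 ≤ c₂ * (Real.log n / n) := by
  subst hρ
  refine ⟨1/32, 3, by norm_num, by norm_num, 256, ?_⟩
  intro n hn
  have hn2 : 2 ≤ n := by omega
  have hNR : (256:ℝ) ≤ (n:ℝ) := by exact_mod_cast hn
  have hNpos : (0:ℝ) < n := by linarith
  set L : ℝ := Real.log n with hLdef
  have hL5 : (5:ℝ) ≤ L := by
    have h2 : Real.log 256 ≤ L := by
      rw [hLdef]
      exact (Real.log_le_log_iff (by norm_num) (by linarith)).mpr hNR
    have h3 : Real.log 256 = 8 * Real.log 2 := by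
      rw [show (256:ℝ) = 2^8 by norm_num, Real.log_pow]
      push_cast; ring
    nlinarith [Real.log_two_gt_d9]
  have hL0 : (0:ℝ) ≤ L := by linarith
  -- the cutoff m = n^(1/4)
  set m := Nat.sqrt (Nat.sqrt n) with hmdef
  have hsq1 : Nat.sqrt n * Nat.sqrt n ≤ n := Nat.sqrt_le n
  have hsq2 : m * m ≤ Nat.sqrt n := Nat.sqrt_le (Nat.sqrt n)
  have h16 : 16 ≤ Nat.sqrt n := Nat.le_sqrt.mpr (by omega)
  have hm4 : 4 ≤ m := Nat.le_sqrt.mpr (by omega)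
  have hmn : m + 1 ≤ n := by
    have h1 : m ≤ Nat.sqrt n := Nat.sqrt_le_self _
    have h2 : Nat.sqrt n < n := Nat.sqrt_lt_self (by omega)
    omega
  have hm4n : n ≤ (m+1)^4 := by
    have h1 : n < (Nat.sqrt n + 1) * (Nat.sqrt n + 1) := Nat.lt_succ_sqrt n
    have h2 : Nat.sqrt n < (m+1)*(m+1) := Nat.lt_succ_sqrt (Nat.sqrt n)
    have h3 : Nat.sqrt n + 1 ≤ (m+1)*(m+1) := h2
    have h4 : (Nat.sqrt n + 1) * (Nat.sqrt n + 1) ≤ ((m+1)*(m+1)) * ((m+1)*(m+1)) :=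
      Nat.mul_le_mul h3 h3
    calc n ≤ (Nat.sqrt n + 1) * (Nat.sqrt n + 1) := le_of_lt h1
      _ ≤ ((m+1)*(m+1)) * ((m+1)*(m+1)) := h4
      _ = (m+1)^4 := by ring
  -- key size estimate
  have hkey : (m:ℝ) * (1 + L) ≤ 2*((n:ℝ)-1) := by
    set S := Real.sqrt n with hSdef
    have hS0 : (0:ℝ) < S := Real.sqrt_pos.mpr hNpos
    have hSle : ((Nat.sqrt n : ℕ):ℝ) ≤ S := by
      rw [hSdef, Real.le_sqrt (by positivity) (by positivity)]
      exact_mod_cast Nat.sqrt_le' n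
    have hM2S : (m:ℝ)*(m:ℝ) ≤ S := by
      refine le_trans ?_ hSle
      exact_mod_cast hsq2
    have hS16 : (16:ℝ) ≤ S := by
      refine le_trans ?_ hSle
      exact_mod_cast h16
    have hSn : S*S = (n:ℝ) := Real.mul_self_sqrt (le_of_lt hNpos)
    have hlog : 1 + L ≤ 2*S := by
      have h1 : Real.log S ≤ S - 1 := Real.log_le_sub_one_of_pos hS0
      have h2 : L = 2 * Real.log S := by
        rw [hLdef, hSdef, Real.log_sqrt (le_of_lt hNpos)]
        ring
      linarith
    have hM0 : (0:ℝ) ≤ (m:ℝ) := by positivity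
    have hMS : (m:ℝ)*S ≤ (n:ℝ)-1 := by
      have hS16n : 16*S ≤ (n:ℝ) := by nlinarith
      have t0 : (m:ℝ)*(m:ℝ)*(S*S) = (m:ℝ)*(m:ℝ)*(n:ℝ) := by rw [hSn]
      have t1 : (m:ℝ)*(m:ℝ)*(n:ℝ) ≤ S*(n:ℝ) := mul_le_mul_of_nonneg_right hM2S hNpos.le
      have t3 : 16*S*(n:ℝ) ≤ (n:ℝ)*(n:ℝ) := by nlinarith [mul_le_mul_of_nonneg_right hS16n hNpos.le]
      have t4 : 256*(n:ℝ) ≤ (n:ℝ)*(n:ℝ) := by nlinarith [mul_le_mul_of_nonneg_right hNR hNpos.le]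
      have ha : ((m:ℝ)*S)^2 ≤ (((n:ℝ)-1))^2 := by nlinarith [t0, t1, t3, t4]
      calc (m:ℝ)*S = Real.sqrt (((m:ℝ)*S)^2) := (Real.sqrt_sq (by positivity)).symm
        _ ≤ Real.sqrt ((((n:ℝ)-1))^2) := Real.sqrt_le_sqrt ha
        _ = (n:ℝ)-1 := Real.sqrt_sq (by linarith)
    calc (m:ℝ) * (1 + L) ≤ (m:ℝ) * (2*S) := mul_le_mul_of_nonneg_left hlog hM0
      _ = 2*((m:ℝ)*S) := by ring
      _ ≤ 2*((n:ℝ)-1) := by linarith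
  -- bound on vA n m 1
  have hV : vA n m 1 ≤ (1 + L)/(8*(n:ℝ)) := by
    rw [vA_one hmn]
    have h1 : (harmonic m : ℝ) ≤ 1 + Real.log m := harmonic_le_one_add_log m
    have h2 : Real.log m ≤ L := by
      rw [hLdef]
      refine (Real.log_le_log_iff ?_ hNpos).mpr ?_
      · exact_mod_cast (by omega : 0 < m)
      · exact_mod_cast (by omega : m ≤ n)
    gcongr
    linarith
  -- instantiate recursion hypotheses
  have hGnn := hGn n hn2
  have hrec : ∀ j : ℕ, 1 ≤ j → j ≤ n - 1 →
      G n j = ((j : ℝ) / n + ((j : ℝ) * ((n : ℝ) - j) / ((n : ℝ) - 1)) * G n (j + 1)) /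
        (1 + (j : ℝ) / n + (j : ℝ) * ((n : ℝ) - j) / ((n : ℝ) - 1)) :=
    fun j hj hj2 => hGrec n hn2 j hj hj2
  have hup := upperB G n hn2 hGnn hrec (n-1) 1 le_rfl (by omega)
  have hlo := lowerB G n m hn2 (by omega) hmn hGnn hrec hV hkey hL0 (n-1) 1 le_rfl (by omega)
  norm_num at hup hlo
  constructor
  · -- lower bound
    have h1 : Real.log ((m:ℝ)+1) ≤ (harmonic m : ℝ) := by
      have := log_add_one_le_harmonic m
      push_cast at this ⊢
      exact this
    have h2 : L ≤ 4 * Real.log ((m:ℝ)+1) := by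
      have hle : (n:ℝ) ≤ ((m:ℝ)+1)^4 := by exact_mod_cast hm4n
      have h3 : L ≤ Real.log (((m:ℝ)+1)^4) := by
        rw [hLdef]
        exact (Real.log_le_log_iff hNpos (by positivity)).mpr hle
      rw [Real.log_pow] at h3
      push_cast at h3
      linarith
    have h4 : L/4 ≤ (harmonic m : ℝ) := by linarith
    have h5 : vA n m 1 = (harmonic m : ℝ)/(8*(n:ℝ)) := vA_one hmn
    have h6 : 1/32 * (L/(n:ℝ)) ≤ (harmonic m : ℝ)/(8*(n:ℝ)) := by
      have e : 1/32 * (L/(n:ℝ)) = (L/4)/(8*(n:ℝ)) := by ring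
      rw [e]
      gcongr
    calc 1/32 * (L/(n:ℝ)) ≤ (harmonic m : ℝ)/(8*(n:ℝ)) := h6
      _ = vA n m 1 := h5.symm
      _ ≤ G n 1 := hlo
  · -- upper bound
    have h1 : wA n 1 = 1/(2*(n:ℝ)) + (2/(n:ℝ)) * (harmonic (n-1) : ℝ) := by
      unfold wA
      rw [wA_sum_eq n hn2]
    have h2 : (harmonic (n-1) : ℝ) ≤ 1 + L := by
      have h3 : (harmonic (n-1) : ℝ) ≤ 1 + Real.log (n-1 : ℕ) := harmonic_le_one_add_log (n-1)
      have h4 : Real.log ((n-1 : ℕ):ℝ) ≤ L := by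
        rw [hLdef]
        refine (Real.log_le_log_iff ?_ hNpos).mpr ?_
        · exact_mod_cast (by omega : 0 < n - 1)
        · exact_mod_cast (by omega : n - 1 ≤ n)
      linarith
    have h5 : (harmonic (n-1) : ℝ) ≥ 0 := by
      have := harmonic_pos (n := n-1) (by omega)
      exact_mod_cast this.le
    have h6 : wA n 1 ≤ 1/(2*(n:ℝ)) + (2/(n:ℝ))*(1+L) := by
      rw [h1]
      gcongr
    have h7 : 1/(2*(n:ℝ)) + (2/(n:ℝ))*(1+L) ≤ 3 * (L/(n:ℝ)) := by
      have e : 3*(L/(n:ℝ)) - (1/(2*(n:ℝ)) + (2/(n:ℝ))*(1+L)) = (L - 5/2)/(n:ℝ) := by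
        field_simp
        ring
      have h8 : (0:ℝ) ≤ (L - 5/2)/(n:ℝ) := div_nonneg (by linarith) (by positivity)
      linarith
    calc G n 1 ≤ wA n 1 := hup
      _ ≤ 1/(2*(n:ℝ)) + (2/(n:ℝ))*(1+L) := h6
      _ ≤ 3 * (L/(n:ℝ)) := h7
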